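/- arXiv:1211.0130 — 5 statements merged into one kernel-verified Lean document; each statement's English description precedes it below -/
import Mathlib

section
/- Fix σ > 0 and α < 0. As ρ → 0+ (with θ = ρ/σ), the FTG density f(x;α,θ,ρ) = ρ^α σ^{-1}(1+x/σ)^{α-1} exp(-ρ(1+x/σ))/Γ(α,ρ) converges pointwise on (0,∞) to the Pareto density p(x;α,σ) = -α σ^{-1}(1+x/σ)^{α-1}. -/
open MeasureTheory Real Filter Set

noncomputable def uGamma (a r : ℝ) : ℝ := ∫ t in Set.Ioi r, t ^ (a - 1) * Real.exp (-t)

noncomputable def ftg (a θ ρ x : ℝ) : ℝ :=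
  θ * (ρ + θ * x) ^ (a - 1) * Real.exp (-(ρ + θ * x)) / uGamma a ρ

noncomputable def pareto (a σ x : ℝ) : ℝ := -a * σ⁻¹ * (1 + x / σ) ^ (a - 1)

lemma aux_integrable {α r : ℝ} (hα : α < 0) (hr : 0 < r) :
    IntegrableOn (fun t : ℝ => t ^ (α - 1) * Real.exp (-t)) (Set.Ioi r) := by
  apply Integrable.mono' (g := fun t : ℝ => t ^ (α - 1))
    (integrableOn_Ioi_rpow_of_lt (by linarith) hr)
  · apply ContinuousOn.aestronglyMeasurable ?_ measurableSet_Ioi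
    intro t ht
    exact ((Real.continuousAt_rpow_const t _ (Or.inl (ne_of_gt (hr.trans ht)))).continuousWithinAt.mul
      (Real.continuous_exp.comp continuous_neg).continuousWithinAt)
  · filter_upwards [ae_restrict_mem measurableSet_Ioi] with t ht
    rw [norm_mul, Real.norm_of_nonneg (rpow_nonneg (le_of_lt (hr.trans ht)) _),
      Real.norm_of_nonneg (le_of_lt (Real.exp_pos _))]
    nlinarith [Real.exp_le_one_iff.mpr (by linarith [mem_Ioi.mp ht] : -t ≤ 0),
      rpow_pos_of_pos (hr.trans (mem_Ioi.mp ht)) (α - 1)]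

lemma uGamma_le {α ρ : ℝ} (hα : α < 0) (hρ : 0 < ρ) : uGamma α ρ ≤ ρ ^ α / (-α) := by
  have h1 : uGamma α ρ ≤ ∫ t in Set.Ioi ρ, t ^ (α - 1) := by
    apply setIntegral_mono_on (aux_integrable hα hρ)
      (integrableOn_Ioi_rpow_of_lt (by linarith) hρ) measurableSet_Ioi
    intro t ht
    nlinarith [Real.exp_le_one_iff.mpr (by linarith [mem_Ioi.mp ht] : -t ≤ 0),
      rpow_pos_of_pos (hρ.trans (mem_Ioi.mp ht)) (α - 1),
      Real.exp_pos (-t)]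
  have h2 : ∫ t in Set.Ioi ρ, t ^ (α - 1) = -ρ ^ α / α := by
    rw [integral_Ioi_rpow_of_lt (by linarith) hρ]
    ring_nf
  rw [h2] at h1
  rw [div_neg]
  simpa [neg_div] using h1

lemma uGamma_ge {α ρ δ : ℝ} (hα : α < 0) (hρ : 0 < ρ) (hδ : ρ ≤ δ) :
    Real.exp (-δ) * ((ρ ^ α - δ ^ α) / (-α)) ≤ uGamma α ρ := by
  have hδ0 : 0 < δ := lt_of_lt_of_le hρ hδ
  have hIoc : IntegrableOn (fun t : ℝ => t ^ (α - 1) * Real.exp (-t)) (Set.Ioc ρ δ) :=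
    (aux_integrable hα hρ).mono_set Set.Ioc_subset_Ioi_self
  have h1 : (∫ t in Set.Ioc ρ δ, t ^ (α - 1) * Real.exp (-t)) ≤ uGamma α ρ := by
    apply setIntegral_mono_set (aux_integrable hα hρ)
    · filter_upwards [ae_restrict_mem measurableSet_Ioi] with t ht
      exact mul_nonneg (rpow_nonneg (le_of_lt (hρ.trans ht)) _) (Real.exp_pos _).le
    · exact HasSubset.Subset.eventuallyLE Set.Ioc_subset_Ioi_self
  refine le_trans ?_ h1
  have h2 : (∫ t in Set.Ioc ρ δ, t ^ (α - 1) * Real.exp (-δ)) ≤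
      ∫ t in Set.Ioc ρ δ, t ^ (α - 1) * Real.exp (-t) := by
    apply setIntegral_mono_on ?_ hIoc measurableSet_Ioc
    · intro t ht
      have ht1 : 0 < t := hρ.trans ht.1
      have : Real.exp (-δ) ≤ Real.exp (-t) := Real.exp_le_exp.mpr (by linarith [ht.2])
      nlinarith [rpow_pos_of_pos ht1 (α - 1)]
    · exact (((integrableOn_Ioi_rpow_of_lt (show α - 1 < -1 by linarith) hρ).mono_set
        Set.Ioc_subset_Ioi_self).mul_const _)
  refine le_trans (le_of_eq ?_) h2
  rw [MeasureTheory.integral_mul_const]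
  have h3 : (∫ t in Set.Ioc ρ δ, t ^ (α - 1)) = (δ ^ α - ρ ^ α) / α := by
    rw [← intervalIntegral.integral_of_le hδ]
    rw [integral_rpow (Or.inr ⟨by intro h; apply hα.ne; linarith [sub_eq_iff_eq_add.mp h],
      by rw [Set.uIcc_of_le hδ]; intro h; exact absurd h.1 (not_le.mpr hρ)⟩)]
    norm_num
  rw [h3, div_neg, ← neg_div, neg_sub]
  ring

lemma h_tendsto {α : ℝ} (hα : α < 0) :
    Filter.Tendsto (fun ρ : ℝ => (-α) * ρ ^ (-α) * uGamma α ρ)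
      (nhdsWithin 0 (Set.Ioi 0)) (nhds 1) := by
  have hna : (-α) ≠ 0 := by linarith
  have hupper : ∀ ρ ∈ Set.Ioi (0:ℝ), (-α) * ρ ^ (-α) * uGamma α ρ ≤ 1 := by
    intro ρ hρ
    have hρ' : (0:ℝ) < ρ := hρ
    have h1 := uGamma_le hα hρ'
    have h2 : (0:ℝ) < ρ ^ (-α) := rpow_pos_of_pos hρ' _
    have h3 : ρ ^ (-α) * ρ ^ α = 1 := by rw [← rpow_add hρ']; simp
    calc (-α) * ρ ^ (-α) * uGamma α ρ ≤ (-α) * ρ ^ (-α) * (ρ ^ α / (-α)) :=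
          mul_le_mul_of_nonneg_left h1 (mul_nonneg (by linarith) h2.le)
      _ = (ρ ^ (-α) * ρ ^ α) * ((-α) / (-α)) := by ring
      _ = 1 := by rw [h3, div_self hna, mul_one]
  have hlower : ∀ ρ ∈ Set.Ioo (0:ℝ) 1,
      Real.exp (-Real.sqrt ρ) * (1 - ρ ^ (-α/2)) ≤ (-α) * ρ ^ (-α) * uGamma α ρ := by
    intro ρ hρ
    have hρ0 : (0:ℝ) < ρ := hρ.1
    have hs : ρ ≤ Real.sqrt ρ := by
      nlinarith [Real.sq_sqrt hρ0.le, Real.sqrt_nonneg ρ, hρ.2]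
    have h1 := uGamma_ge hα hρ0 hs
    have h2 : (0:ℝ) < ρ ^ (-α) := rpow_pos_of_pos hρ0 _
    have h3 : ρ ^ (-α) * ρ ^ α = 1 := by rw [← rpow_add hρ0]; simp
    have key : ρ ^ (-α) * Real.sqrt ρ ^ α = ρ ^ (-α/2) := by
      rw [Real.sqrt_eq_rpow, ← Real.rpow_mul hρ0.le, ← Real.rpow_add hρ0]
      congr 1; ring
    have step : (-α) * ρ ^ (-α) * (Real.exp (-Real.sqrt ρ) * ((ρ ^ α - Real.sqrt ρ ^ α) / (-α)))
        = Real.exp (-Real.sqrt ρ) * (1 - ρ ^ (-α/2)) := by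
      rw [← key, ← h3]
      field_simp [hα.ne]
    calc Real.exp (-Real.sqrt ρ) * (1 - ρ ^ (-α/2))
        = (-α) * ρ ^ (-α) * (Real.exp (-Real.sqrt ρ) * ((ρ ^ α - Real.sqrt ρ ^ α) / (-α))) :=
          step.symm
      _ ≤ (-α) * ρ ^ (-α) * uGamma α ρ :=
          mul_le_mul_of_nonneg_left h1 (mul_nonneg (by linarith) h2.le)
  have hL : Tendsto (fun ρ : ℝ => Real.exp (-Real.sqrt ρ) * (1 - ρ ^ (-α/2)))
      (nhdsWithin 0 (Set.Ioi 0)) (nhds 1) := by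
    have h1 : Tendsto (fun ρ : ℝ => Real.exp (-Real.sqrt ρ)) (nhds 0) (nhds 1) := by
      have := (Real.continuous_exp.comp (Real.continuous_sqrt.neg)).tendsto 0
      simp only [Function.comp_apply, Pi.neg_apply, Real.sqrt_zero, neg_zero, Real.exp_zero] at this
      exact this
    have h2 : Tendsto (fun ρ : ℝ => ρ ^ (-α/2)) (nhds 0) (nhds 0) := by
      have hc : ContinuousAt (fun ρ : ℝ => ρ ^ (-α/2)) 0 :=
        Real.continuousAt_rpow_const 0 _ (Or.inr (by linarith))
      have := hc.tendsto
      simpa [Real.zero_rpow (show (-α/2) ≠ 0 by intro h; apply hna; linarith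
        [(div_eq_zero_iff.mp h)])] using this
    have h3 := h1.mul ((tendsto_const_nhds (x := (1:ℝ))).sub h2)
    simp only [sub_zero, mul_one] at h3
    exact h3.mono_left nhdsWithin_le_nhds
  refine tendsto_of_tendsto_of_tendsto_of_le_of_le' hL tendsto_const_nhds ?_ ?_
  · exact Filter.eventually_of_mem (Ioo_mem_nhdsGT_of_mem ⟨le_refl 0, zero_lt_one⟩)
      (fun ρ hρ => hlower ρ hρ)
  · exact Filter.eventually_of_mem self_mem_nhdsWithin (fun ρ hρ => hupper ρ hρ)

theorem ftg_tendsto_pareto_pointwise (σ α : ℝ) (hσ : 0 < σ) (hα : α < 0) :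
    ∀ x ∈ Set.Ioi (0:ℝ),
      Filter.Tendsto (fun ρ : ℝ => ftg α (ρ / σ) ρ x)
        (nhdsWithin 0 (Set.Ioi 0)) (nhds (pareto α σ x)) := by
  intro x hx
  have hx0 : (0:ℝ) < x := hx
  set c := 1 + x / σ with hc_def
  have hc : 0 < c := by have := div_pos hx0 hσ; simp [hc_def]; linarith
  have hna : (-α) ≠ 0 := by linarith
  have hh := h_tendsto (α := α) hα
  have hhpos : ∀ᶠ ρ in nhdsWithin (0:ℝ) (Set.Ioi 0),
      0 < (-α) * ρ ^ (-α) * uGamma α ρ :=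
    hh.eventually (eventually_gt_nhds (show (0:ℝ) < 1 by norm_num))
  have hexp : Tendsto (fun ρ : ℝ => Real.exp (-(ρ * c))) (nhdsWithin 0 (Set.Ioi 0)) (nhds 1) := by
    have hcont : Continuous fun ρ : ℝ => Real.exp (-(ρ * c)) := by continuity
    have := hcont.tendsto 0
    simp only [zero_mul, neg_zero, Real.exp_zero] at this
    exact this.mono_left nhdsWithin_le_nhds
  have hdiv : Tendsto (fun ρ : ℝ => (-α) / ((-α) * ρ ^ (-α) * uGamma α ρ))
      (nhdsWithin 0 (Set.Ioi 0)) (nhds (-α)) := by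
    have := Tendsto.div (tendsto_const_nhds (x := (-α))) hh one_ne_zero
    rw [div_one] at this
    exact this
  have hmain : Tendsto
      (fun ρ : ℝ => σ⁻¹ * c ^ (α - 1) * Real.exp (-(ρ * c)) * ((-α) / ((-α) * ρ ^ (-α) * uGamma α ρ)))
      (nhdsWithin 0 (Set.Ioi 0)) (nhds (σ⁻¹ * c ^ (α - 1) * 1 * (-α))) :=
    ((tendsto_const_nhds (x := σ⁻¹ * c ^ (α - 1))).mul hexp).mul hdiv
  have hpar : pareto α σ x = σ⁻¹ * c ^ (α - 1) * 1 * (-α) := by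
    unfold pareto; rw [← hc_def]; ring
  rw [hpar]
  apply Filter.Tendsto.congr' ?_ hmain
  filter_upwards [hhpos, self_mem_nhdsWithin] with ρ hpos (hρ : (0:ℝ) < ρ)
  have hρα : (0:ℝ) < ρ ^ (-α) := rpow_pos_of_pos hρ _
  have hG : 0 < uGamma α ρ := by
    by_contra h
    push_neg at h
    nlinarith [mul_pos (show (0:ℝ) < -α by linarith) hρα]
  have harg : ρ + ρ / σ * x = ρ * c := by
    rw [hc_def]; field_simp
  have hmr : (ρ * c) ^ (α - 1) = ρ ^ (α - 1) * c ^ (α - 1) :=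
    Real.mul_rpow hρ.le hc.le
  have hre : ρ ^ (α - 1) * ρ = ρ ^ α := by
    rw [← Real.rpow_add_one hρ.ne']; norm_num
  have hinv : ρ ^ (-α) = (ρ ^ α)⁻¹ := Real.rpow_neg hρ.le α
  have hραpos : (0:ℝ) < ρ ^ α := rpow_pos_of_pos hρ _
  show σ⁻¹ * c ^ (α - 1) * Real.exp (-(ρ * c)) * ((-α) / ((-α) * ρ ^ (-α) * uGamma α ρ))
      = ftg α (ρ / σ) ρ x
  unfold ftg
  rw [harg, hmr, hinv]
  rw [show (-α) / (-α * (ρ ^ α)⁻¹ * uGamma α ρ) = ρ ^ α / uGamma α ρ by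
    rw [mul_comm, ← mul_assoc, mul_comm (uGamma α ρ)]
    field_simp
    exact div_self hα.ne]
  rw [← hre]
  field_simp
end

section
/- Fix σ > 0 and α < 0. As ρ → 0+ (with θ = ρ/σ), the FTG density f(·;α,θ,ρ) converges to the Pareto density p(·;α,σ) in L¹((0,∞)) norm. -/
open MeasureTheory Real Filter Set

noncomputable def hfun (α ρ : ℝ) : ℝ :=
  ∫ s in Set.Ioi (1:ℝ), s ^ (α - 1) * Real.exp (-(ρ * s))

lemma uGamma_eq (α : ℝ) {ρ : ℝ} (hρ : 0 < ρ) :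
    uGamma α ρ = ρ ^ α * hfun α ρ := by
  have h1 : (∫ s in Set.Ioi (1:ℝ), (ρ * s) ^ (α - 1) * Real.exp (-(ρ * s)))
      = ρ⁻¹ • ∫ t in Set.Ioi (ρ * 1), t ^ (α - 1) * Real.exp (-t) :=
    integral_comp_mul_left_Ioi (fun t => t ^ (α - 1) * Real.exp (-t)) 1 hρ
  have h2 : (∫ s in Set.Ioi (1:ℝ), (ρ * s) ^ (α - 1) * Real.exp (-(ρ * s)))
      = ρ ^ (α - 1) * hfun α ρ := by
    rw [hfun, ← integral_const_mul]
    refine setIntegral_congr_fun measurableSet_Ioi (fun s hs => ?_)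
    rw [Real.mul_rpow hρ.le (by linarith [mem_Ioi.mp hs] : (0:ℝ) ≤ s)]
    ring
  have hρα : ρ ^ α = ρ * ρ ^ (α - 1) := by
    rw [show α = 1 + (α - 1) by ring, Real.rpow_add hρ, Real.rpow_one]
    ring_nf
  rw [mul_one] at h1
  have h3 : ρ ^ (α - 1) * hfun α ρ = ρ⁻¹ * uGamma α ρ := by
    rw [← h2, h1, smul_eq_mul, uGamma]
  field_simp at h3
  rw [hρα]
  linear_combination -h3

lemma hfun_tendsto (α : ℝ) (hα : α < 0) :
    Tendsto (fun ρ => hfun α ρ) (nhdsWithin 0 (Set.Ioi 0)) (nhds (-α)⁻¹) := by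
  have hint : IntegrableOn (fun s : ℝ => s ^ (α - 1)) (Set.Ioi (1:ℝ)) :=
    integrableOn_Ioi_rpow_of_lt (by linarith) one_pos
  have key : Tendsto (fun ρ => hfun α ρ) (nhdsWithin 0 (Set.Ioi 0))
      (nhds (∫ s in Set.Ioi (1:ℝ), s ^ (α - 1))) := by
    refine tendsto_integral_filter_of_dominated_convergence (fun s => s ^ (α - 1)) ?_ ?_ hint ?_
    · refine Eventually.of_forall (fun ρ => ?_)
      exact (by fun_prop : Measurable fun s : ℝ => s ^ (α - 1) * Real.exp (-(ρ * s))).aestronglyMeasurable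
    · filter_upwards [self_mem_nhdsWithin] with ρ (hρ : 0 < ρ)
      refine (ae_restrict_iff' measurableSet_Ioi).2 (Eventually.of_forall fun s hs => ?_)
      have hs1 : (1:ℝ) < s := hs
      have hA : (0:ℝ) ≤ s ^ (α - 1) := Real.rpow_nonneg (by linarith) _
      have hE : Real.exp (-(ρ * s)) ≤ 1 := by
        rw [← Real.exp_zero]
        exact Real.exp_le_exp.2 (by nlinarith)
      have hE0 : (0:ℝ) < Real.exp (-(ρ * s)) := Real.exp_pos _
      rw [Real.norm_eq_abs, abs_of_nonneg (by positivity)]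
      calc s ^ (α - 1) * Real.exp (-(ρ * s)) ≤ s ^ (α - 1) * 1 := by
            exact mul_le_mul_of_nonneg_left hE hA
        _ = s ^ (α - 1) := mul_one _
    · refine Eventually.of_forall (fun s => ?_)
      have hc : Continuous fun ρ : ℝ => s ^ (α - 1) * Real.exp (-(ρ * s)) := by
        continuity
      have := (hc.tendsto 0).mono_left (nhdsWithin_le_nhds (s := Set.Ioi 0))
      simpa using this
  have hval : (∫ s in Set.Ioi (1:ℝ), s ^ (α - 1)) = (-α)⁻¹ := by
    rw [integral_Ioi_rpow_of_lt (by linarith) one_pos]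
    rw [Real.one_rpow]
    field_simp
    ring
  rwa [hval] at key

lemma integrable_par (σ α : ℝ) (hσ : 0 < σ) (hα : α < 0) :
    IntegrableOn (fun x : ℝ => (1 + x / σ) ^ (α - 1)) (Set.Ioi 0) := by
  have hmeas : Measurable fun x : ℝ => (1 + x / σ) ^ (α - 1) := by fun_prop
  have h1 : IntegrableOn (fun x : ℝ => (1 + x / σ) ^ (α - 1)) (Set.Ioc 0 σ) := by
    refine Measure.integrableOn_of_bounded (M := 1) (by simp) hmeas.aestronglyMeasurable ?_
    refine (ae_restrict_iff' measurableSet_Ioc).2 (Eventually.of_forall fun x hx => ?_)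
    have hx0 : 0 < x := hx.1
    have hb : (1:ℝ) ≤ 1 + x / σ := by
      have : 0 ≤ x / σ := by positivity
      linarith
    rw [Real.norm_eq_abs, abs_of_nonneg (Real.rpow_nonneg (by linarith) _)]
    exact Real.rpow_le_one_of_one_le_of_nonpos hb (by linarith)
  have h2 : IntegrableOn (fun x : ℝ => (1 + x / σ) ^ (α - 1)) (Set.Ioi σ) := by
    have hint : IntegrableOn (fun x : ℝ => σ ^ (1 - α) * x ^ (α - 1)) (Set.Ioi σ) :=
      (integrableOn_Ioi_rpow_of_lt (by linarith) hσ).const_mul _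
    refine hint.integrable.mono hmeas.aestronglyMeasurable ?_
    refine (ae_restrict_iff' measurableSet_Ioi).2 (Eventually.of_forall fun x hx => ?_)
    have hxσ : σ < x := hx
    have hx0 : 0 < x := hσ.trans hxσ
    have hle : x / σ ≤ 1 + x / σ := by linarith
    have hds : 0 < x / σ := by positivity
    have hstep : (1 + x / σ) ^ (α - 1) ≤ (x / σ) ^ (α - 1) :=
      Real.rpow_le_rpow_of_nonpos hds hle (by linarith)
    have hdiv : (x / σ) ^ (α - 1) = σ ^ (1 - α) * x ^ (α - 1) := by
      rw [Real.div_rpow hx0.le hσ.le, div_eq_mul_inv, ← Real.rpow_neg hσ.le]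
      ring_nf
    rw [Real.norm_eq_abs, Real.norm_eq_abs,
      abs_of_nonneg (Real.rpow_nonneg (by linarith) _),
      abs_of_nonneg (by positivity)]
    rw [hdiv] at hstep
    exact hstep
  have : Set.Ioi (0:ℝ) = Set.Ioc 0 σ ∪ Set.Ioi σ := (Set.Ioc_union_Ioi_eq_Ioi hσ.le).symm
  rw [this]
  exact h1.union h2

lemma ftg_eq (σ α : ℝ) (hσ : 0 < σ) {ρ x : ℝ} (hρ : 0 < ρ) (hx : 0 < x) :
    ftg α (ρ / σ) ρ x
      = (1 + x / σ) ^ (α - 1) * Real.exp (-(ρ * (1 + x / σ))) / (σ * hfun α ρ) := by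
  have e1 : ρ + ρ / σ * x = ρ * (1 + x / σ) := by field_simp
  have hbase : (0:ℝ) ≤ 1 + x / σ := by positivity
  have hρ1 : ρ ^ (α - 1) ≠ 0 := (Real.rpow_pos_of_pos hρ _).ne'
  have hρα : ρ ^ α = ρ * ρ ^ (α - 1) := by
    rw [show α = 1 + (α - 1) by ring, Real.rpow_add hρ, Real.rpow_one]
    ring_nf
  rw [ftg, e1, Real.mul_rpow hρ.le hbase, uGamma_eq α hρ, hρα]
  rcases eq_or_ne (hfun α ρ) 0 with h0 | h0
  · simp [h0]
  · field_simp

theorem ftg_tendsto_pareto_L1 (σ α : ℝ) (hσ : 0 < σ) (hα : α < 0) :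
    Filter.Tendsto (fun ρ : ℝ => ∫ x in Set.Ioi (0:ℝ), |ftg α (ρ / σ) ρ x - pareto α σ x|)
      (nhdsWithin 0 (Set.Ioi 0)) (nhds 0) := by
  have hαpos : 0 < -α := by linarith
  have hlim := hfun_tendsto α hα
  set c : ℝ := (-α)⁻¹ / 2 with hc_def
  have hc : 0 < c := by positivity
  have hclt : c < (-α)⁻¹ := by
    rw [hc_def]
    linarith [inv_pos.mpr hαpos]
  have hev : ∀ᶠ ρ in nhdsWithin (0:ℝ) (Set.Ioi 0), c < hfun α ρ :=
    hlim.eventually_const_lt hclt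
  -- the dominating function
  set bound : ℝ → ℝ := fun x => ((σ * c)⁻¹ + (-α) * σ⁻¹) * (1 + x / σ) ^ (α - 1)
    with hbound_def
  have hbound_int : IntegrableOn bound (Set.Ioi 0) :=
    (integrable_par σ α hσ hα).const_mul _
  have hFmeas : ∀ᶠ ρ in nhdsWithin (0:ℝ) (Set.Ioi 0),
      AEStronglyMeasurable (fun x => |ftg α (ρ / σ) ρ x - pareto α σ x|)
        (volume.restrict (Set.Ioi 0)) := by
    filter_upwards [self_mem_nhdsWithin] with ρ (hρ : 0 < ρ)
    have hm1 : Measurable fun x : ℝ => ftg α (ρ / σ) ρ x := by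
      unfold ftg; fun_prop
    have hm2 : Measurable fun x : ℝ => pareto α σ x := by
      unfold pareto; fun_prop
    exact ((hm1.sub hm2).abs).aestronglyMeasurable
  have hFbound : ∀ᶠ ρ in nhdsWithin (0:ℝ) (Set.Ioi 0),
      ∀ᵐ x ∂(volume.restrict (Set.Ioi 0)),
        ‖|ftg α (ρ / σ) ρ x - pareto α σ x|‖ ≤ bound x := by
    filter_upwards [self_mem_nhdsWithin, hev] with ρ (hρ : 0 < ρ) hhρ
    refine (ae_restrict_iff' measurableSet_Ioi).2 (Eventually.of_forall fun x hx => ?_)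
    have hx0 : 0 < x := hx
    have hA : (0:ℝ) ≤ (1 + x / σ) ^ (α - 1) := Real.rpow_nonneg (by positivity) _
    have hh0 : 0 < hfun α ρ := hc.trans hhρ
    have hE : Real.exp (-(ρ * (1 + x / σ))) ≤ 1 := by
      have hb : 0 < 1 + x / σ := by positivity
      calc Real.exp (-(ρ * (1 + x / σ))) ≤ Real.exp 0 :=
            Real.exp_le_exp.2 (by nlinarith)
        _ = 1 := Real.exp_zero
    have hE0 : 0 < Real.exp (-(ρ * (1 + x / σ))) := Real.exp_pos _
    rw [Real.norm_eq_abs, abs_abs, ftg_eq σ α hσ hρ hx0]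
    have hpar : |pareto α σ x| = (-α) * σ⁻¹ * (1 + x / σ) ^ (α - 1) := by
      rw [pareto, abs_of_nonneg]
      positivity
    have hftg : |(1 + x / σ) ^ (α - 1) * Real.exp (-(ρ * (1 + x / σ))) / (σ * hfun α ρ)|
        ≤ (σ * c)⁻¹ * (1 + x / σ) ^ (α - 1) := by
      rw [abs_of_nonneg (by positivity)]
      rw [div_le_iff₀ (by positivity)]
      have h1 : (1 + x / σ) ^ (α - 1) * Real.exp (-(ρ * (1 + x / σ)))
          ≤ (1 + x / σ) ^ (α - 1) := by
        calc (1 + x / σ) ^ (α - 1) * Real.exp (-(ρ * (1 + x / σ)))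
            ≤ (1 + x / σ) ^ (α - 1) * 1 := mul_le_mul_of_nonneg_left hE hA
          _ = _ := mul_one _
      have h2 : (1 + x / σ) ^ (α - 1) ≤ (σ * c)⁻¹ * (1 + x / σ) ^ (α - 1) * (σ * hfun α ρ) := by
        have hkey : (1:ℝ) ≤ (σ * c)⁻¹ * (σ * hfun α ρ) := by
          have h' : σ * c ≤ σ * hfun α ρ := by nlinarith
          calc (1:ℝ) = (σ * c)⁻¹ * (σ * c) := by field_simp
            _ ≤ (σ * c)⁻¹ * (σ * hfun α ρ) :=
                mul_le_mul_of_nonneg_left h' (by positivity)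
        calc (1 + x / σ) ^ (α - 1) = (1 + x / σ) ^ (α - 1) * 1 := (mul_one _).symm
          _ ≤ (1 + x / σ) ^ (α - 1) * ((σ * c)⁻¹ * (σ * hfun α ρ)) :=
              mul_le_mul_of_nonneg_left hkey hA
          _ = (σ * c)⁻¹ * (1 + x / σ) ^ (α - 1) * (σ * hfun α ρ) := by ring
      linarith
    calc |(1 + x / σ) ^ (α - 1) * Real.exp (-(ρ * (1 + x / σ))) / (σ * hfun α ρ)
          - pareto α σ x|
        ≤ |(1 + x / σ) ^ (α - 1) * Real.exp (-(ρ * (1 + x / σ))) / (σ * hfun α ρ)|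
            + |pareto α σ x| := abs_sub _ _
      _ ≤ (σ * c)⁻¹ * (1 + x / σ) ^ (α - 1) + (-α) * σ⁻¹ * (1 + x / σ) ^ (α - 1) := by
          rw [hpar]; linarith
      _ = bound x := by rw [hbound_def]; ring
  have hFlim : ∀ᵐ x ∂(volume.restrict (Set.Ioi 0)),
      Tendsto (fun ρ => |ftg α (ρ / σ) ρ x - pareto α σ x|)
        (nhdsWithin (0:ℝ) (Set.Ioi 0)) (nhds 0) := by
    refine (ae_restrict_iff' measurableSet_Ioi).2 (Eventually.of_forall fun x hx => ?_)
    have hx0 : 0 < x := hx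
    have hA : (0:ℝ) ≤ (1 + x / σ) ^ (α - 1) := Real.rpow_nonneg (by positivity) _
    have hEtend : Tendsto (fun ρ : ℝ => Real.exp (-(ρ * (1 + x / σ))))
        (nhdsWithin 0 (Set.Ioi 0)) (nhds 1) := by
      have hc : Continuous fun ρ : ℝ => Real.exp (-(ρ * (1 + x / σ))) := by continuity
      have := (hc.tendsto 0).mono_left (nhdsWithin_le_nhds (s := Set.Ioi 0))
      simpa using this
    have hne : 0 < (-α)⁻¹ := inv_pos.mpr hαpos
    have hmain : Tendsto (fun ρ : ℝ =>
        (1 + x / σ) ^ (α - 1) * Real.exp (-(ρ * (1 + x / σ))) / (σ * hfun α ρ))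
        (nhdsWithin 0 (Set.Ioi 0)) (nhds ((1 + x / σ) ^ (α - 1) * 1 / (σ * (-α)⁻¹))) := by
      exact (tendsto_const_nhds.mul hEtend).div (tendsto_const_nhds.mul hlim)
        (ne_of_gt (mul_pos hσ hne))
    have hval : (1 + x / σ) ^ (α - 1) * 1 / (σ * (-α)⁻¹) = pareto α σ x := by
      rw [pareto, mul_one, div_eq_mul_inv, mul_inv, inv_inv]
      ring
    rw [hval] at hmain
    have : Tendsto (fun ρ : ℝ =>
        |(1 + x / σ) ^ (α - 1) * Real.exp (-(ρ * (1 + x / σ))) / (σ * hfun α ρ)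
          - pareto α σ x|) (nhdsWithin 0 (Set.Ioi 0)) (nhds 0) := by
      have := (hmain.sub (tendsto_const_nhds (x := pareto α σ x))).abs
      simpa using this
    refine this.congr' ?_
    filter_upwards [self_mem_nhdsWithin] with ρ (hρ : 0 < ρ)
    rw [ftg_eq σ α hσ hρ hx0]
  have key := tendsto_integral_filter_of_dominated_convergence
    (μ := volume.restrict (Set.Ioi 0)) (l := nhdsWithin (0:ℝ) (Set.Ioi 0))
    (F := fun ρ x => |ftg α (ρ / σ) ρ x - pareto α σ x|)
    (f := fun _ => (0:ℝ)) bound hFmeas hFbound hbound_int hFlim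
  simpa using key
end

section
/- There exists ρ₀ > 0 such that for all 0 < ρ < ρ₀, ρ^α/Γ(α,ρ) ≤ -2α, where α < 0 is fixed. -/
open MeasureTheory Real Filter Set

lemma integrableOn_aux (a : ℝ) (ha : a < 0) {r : ℝ} (hr : 0 < r) :
    IntegrableOn (fun t : ℝ => t ^ (a - 1) * Real.exp (-t)) (Set.Ioi r) := by
  have hmeas : AEStronglyMeasurable (fun t : ℝ => t ^ (a - 1) * Real.exp (-t))
      (volume.restrict (Set.Ioi r)) :=
    (Measurable.aestronglyMeasurable (by fun_prop))
  have hg : IntegrableOn (fun t : ℝ => r ^ (a - 1) * Real.exp (-t)) (Set.Ioi r) := by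
    have h := exp_neg_integrableOn_Ioi r (one_pos (α := ℝ))
    simp only [neg_mul, one_mul] at h
    exact h.const_mul _
  refine hg.mono' hmeas ?_
  filter_upwards [ae_restrict_mem measurableSet_Ioi] with t ht
  have ht0 : 0 < t := hr.trans ht
  rw [Real.norm_eq_abs, abs_of_nonneg (by positivity)]
  exact mul_le_mul_of_nonneg_right
    (Real.rpow_le_rpow_of_nonpos hr ht.le (by linarith)) (Real.exp_pos _).le

theorem rpow_div_uGamma_bound (α : ℝ) (hα : α < 0) :
    ∃ ρ₀ > (0:ℝ), ∀ ρ : ℝ, 0 < ρ → ρ < ρ₀ → ρ ^ α / uGamma α ρ ≤ -2 * α := by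
  set c : ℝ := Real.exp (-(1/2 : ℝ)) with hc
  have hc1 : c < 1 := Real.exp_lt_one_iff.2 (by norm_num)
  have hcpos : 0 < c := Real.exp_pos _
  have hαne : α ≠ 0 := ne_of_lt hα
  have hc2 : 1 < 2 * c := by
    have h1 : Real.exp (1/2 : ℝ) * Real.exp (1/2 : ℝ) = Real.exp 1 := by
      rw [← Real.exp_add]; norm_num
    have h2 : Real.exp 1 < 2.7182818286 := Real.exp_one_lt_d9
    have h3 : Real.exp (1/2 : ℝ) < 2 := by
      nlinarith [Real.exp_pos (1/2 : ℝ)]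
    have h5 : c * Real.exp (1/2 : ℝ) = 1 := by
      rw [hc, ← Real.exp_add]; norm_num
    nlinarith [hcpos]
  set C : ℝ := 2 * c / (2 * c - 1) * (1/2 : ℝ) ^ α with hC
  have hCpos : 0 < C := by
    apply mul_pos (div_pos (by linarith) (by linarith)) (Real.rpow_pos_of_pos (by norm_num) _)
  refine ⟨min (C ^ (1/α)) (1/2), lt_min (Real.rpow_pos_of_pos hCpos _) (by norm_num), ?_⟩
  intro ρ hρ hρlt
  have hρhalf : ρ < 1/2 := hρlt.trans_le (min_le_right _ _)
  -- ρ^α > C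
  have hρC : C < ρ ^ α := by
    have h1 : ρ < C ^ (1/α) := hρlt.trans_le (min_le_left _ _)
    have := Real.rpow_lt_rpow_of_neg hρ h1 hα
    rwa [← Real.rpow_mul hCpos.le, one_div, inv_mul_cancel₀ hαne, Real.rpow_one] at this
  -- key: C > (1/2)^α
  have hhalfC : (1/2 : ℝ) ^ α < C := by
    rw [hC]
    have h2 : (1:ℝ) < 2 * c / (2 * c - 1) := by
      rw [lt_div_iff₀ (by linarith)]; linarith
    nlinarith [Real.rpow_pos_of_pos (show (0:ℝ) < 1/2 by norm_num) α]
  -- lower bound on uGamma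
  have hint : IntegrableOn (fun t : ℝ => t ^ (α - 1) * Real.exp (-t)) (Set.Ioi ρ) :=
    integrableOn_aux α hα hρ
  have hlow : c * (ρ ^ α - (1/2 : ℝ) ^ α) / (-α) ≤ uGamma α ρ := by
    have hsub : Set.Ioc ρ (1/2 : ℝ) ⊆ Set.Ioi ρ := Set.Ioc_subset_Ioi_self
    have hintIoc : IntegrableOn (fun t : ℝ => t ^ (α - 1) * Real.exp (-t))
        (Set.Ioc ρ (1/2 : ℝ)) := hint.mono_set hsub
    have step1 : (∫ t in Set.Ioc ρ (1/2 : ℝ), t ^ (α - 1) * Real.exp (-t)) ≤ uGamma α ρ := by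
      refine setIntegral_mono_set hint ?_ (HasSubset.Subset.eventuallyLE hsub)
      filter_upwards [ae_restrict_mem measurableSet_Ioi] with t ht
      have : 0 < t := hρ.trans ht
      positivity
    have step2 : (∫ t in Set.Ioc ρ (1/2 : ℝ), c * t ^ (α - 1))
        ≤ ∫ t in Set.Ioc ρ (1/2 : ℝ), t ^ (α - 1) * Real.exp (-t) := by
      refine setIntegral_mono_on ?_ hintIoc measurableSet_Ioc ?_
      · exact Integrable.const_mul
          (intervalIntegral.intervalIntegrable_rpow
            (Or.inr (Set.notMem_uIcc_of_lt hρ (by norm_num)))).1 c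
      · intro t ht
        have ht0 : 0 < t := hρ.trans ht.1
        rw [mul_comm]
        refine mul_le_mul_of_nonneg_left ?_ (by positivity)
        exact Real.exp_le_exp.2 (by linarith [ht.2])
    have step3 : (∫ t in Set.Ioc ρ (1/2 : ℝ), c * t ^ (α - 1))
        = c * (ρ ^ α - (1/2 : ℝ) ^ α) / (-α) := by
      rw [MeasureTheory.integral_const_mul, ← intervalIntegral.integral_of_le hρhalf.le,
        integral_rpow]
      · rw [sub_add_cancel]
        field_simp [hαne]
        ring
      · exact Or.inr ⟨by intro h; linarith, Set.notMem_uIcc_of_lt hρ (by norm_num)⟩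
    linarith [step3 ▸ step2, step1]
  have hGpos : 0 < uGamma α ρ := by
    have : 0 < c * (ρ ^ α - (1/2 : ℝ) ^ α) / (-α) := by
      apply div_pos (mul_pos hcpos (by linarith)) (by linarith)
    linarith
  rw [div_le_iff₀ hGpos]
  have key : ρ ^ α ≤ -2 * α * (c * (ρ ^ α - (1/2 : ℝ) ^ α) / (-α)) := by
    rw [hC] at hρC
    have h2c : -2 * α * (c * (ρ ^ α - (1/2 : ℝ) ^ α) / (-α))
        = 2 * c * (ρ ^ α - (1/2 : ℝ) ^ α) := by
      field_simp
    rw [h2c]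
    rw [div_mul_eq_mul_div, div_lt_iff₀ (show (0:ℝ) < 2*c - 1 by linarith)] at hρC
    nlinarith [hρC]
  calc ρ ^ α ≤ -2 * α * (c * (ρ ^ α - (1/2 : ℝ) ^ α) / (-α)) := key
    _ ≤ -2 * α * uGamma α ρ := by
        apply mul_le_mul_of_nonneg_left hlow (by linarith)
end

section
/- For α ∈ ℝ, θ > 0, ρ > 0 and every t < θ, the moment generating function of the FTG distribution exists and equals M(t) = (1-t/θ)^{-α} exp(-ρt/θ) Γ(α, ρ(1-t/θ))/Γ(α,ρ). -/
open MeasureTheory Real Filter Set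

lemma uGamma_integrand_integrable (a : ℝ) {r : ℝ} (hr : 0 < r) :
    MeasureTheory.IntegrableOn (fun z : ℝ => z ^ (a - 1) * Real.exp (-z)) (Set.Ioi r) := by
  apply integrable_of_isBigO_exp_neg (b := 1 / 2) (by norm_num)
  · apply ContinuousOn.mul
    · intro z hz
      exact (Real.continuousAt_rpow_const z _
        (Or.inl (lt_of_lt_of_le hr hz).ne')).continuousWithinAt
    · exact (Real.continuous_exp.comp continuous_neg).continuousOn
  · have h := (Real.Gamma_integrand_isLittleO (a - 1)).isBigO
    refine h.congr' ?_ ?_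
    · filter_upwards with x using mul_comm _ _
    · filter_upwards with x using rfl

lemma uGamma_pos (a : ℝ) {r : ℝ} (hr : 0 < r) : 0 < uGamma a r := by
  rw [uGamma]
  rw [setIntegral_pos_iff_support_of_nonneg_ae ?_ (uGamma_integrand_integrable a hr)]
  · have hsub : Set.Ioi r ⊆ Function.support (fun z : ℝ => z ^ (a - 1) * Real.exp (-z)) := by
      intro z hz
      have hz0 : 0 < z := lt_trans hr hz
      exact mul_ne_zero (Real.rpow_pos_of_pos hz0 _).ne' (Real.exp_pos _).ne'
    have : Function.support (fun z : ℝ => z ^ (a - 1) * Real.exp (-z)) ∩ Set.Ioi r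
        = Set.Ioi r := by
      apply Set.inter_eq_self_of_subset_right hsub
    rw [this, Real.volume_Ioi]
    exact ENNReal.zero_lt_top
  · filter_upwards [ae_restrict_mem measurableSet_Ioi] with z hz
    have hz0 : 0 < z := lt_trans hr hz
    positivity

lemma indicator_shift (f : ℝ → ℝ) (a d : ℝ) :
    (Set.Ioi a).indicator (fun x => f (x + d)) =
      fun x => (Set.Ioi (a + d)).indicator f (x + d) := by
  ext x
  by_cases hx : x ∈ Set.Ioi a
  · rw [Set.indicator_of_mem hx, Set.indicator_of_mem]
    exact add_lt_add_left hx.out d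
  · rw [Set.indicator_of_notMem hx, Set.indicator_of_notMem]
    intro h
    exact hx (lt_of_add_lt_add_right h.out)

lemma integrableOn_Ioi_comp_add_right_iff (f : ℝ → ℝ) (a d : ℝ) :
    MeasureTheory.IntegrableOn (fun x => f (x + d)) (Set.Ioi a) ↔
      MeasureTheory.IntegrableOn f (Set.Ioi (a + d)) := by
  rw [← integrable_indicator_iff (measurableSet_Ioi (a := a)),
    ← integrable_indicator_iff (measurableSet_Ioi (a := a + d)), indicator_shift]
  constructor
  · intro h
    have := h.comp_add_right (-d)
    simpa using this
  · intro h
    exact h.comp_add_right d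

lemma integral_comp_add_right_Ioi (f : ℝ → ℝ) (a d : ℝ) :
    (∫ x in Set.Ioi a, f (x + d)) = ∫ x in Set.Ioi (a + d), f x := by
  rw [← integral_indicator (measurableSet_Ioi (a := a)),
    ← integral_indicator (measurableSet_Ioi (a := a + d)), indicator_shift]
  exact integral_add_right_eq_self _ d

theorem ftg_mgf (α θ ρ t : ℝ) (hθ : 0 < θ) (hρ : 0 < ρ) (ht : t < θ) :
    MeasureTheory.IntegrableOn (fun x : ℝ => Real.exp (t * x) * ftg α θ ρ x) (Set.Ioi 0) ∧
    (∫ x in Set.Ioi (0:ℝ), Real.exp (t * x) * ftg α θ ρ x) =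
      (1 - t / θ) ^ (-α) * Real.exp (-ρ * t / θ) *
        uGamma α (ρ * (1 - t / θ)) / uGamma α ρ := by
  set c : ℝ := 1 - t / θ with hc_def
  have hc : 0 < c := by
    have h1 : t / θ < 1 := (div_lt_one hθ).mpr ht
    simp only [hc_def]; linarith
  have hΓ : 0 < uGamma α ρ := uGamma_pos α hρ
  have hcθ : 0 < c * θ := mul_pos hc hθ
  have hcρ : 0 < 0 + c * ρ := by positivity
  set K : ℝ := θ * c ^ (1 - α) * Real.exp (-ρ * t / θ) / uGamma α ρ with hK
  -- pointwise identity
  have key : ∀ x ∈ Set.Ioi (0 : ℝ), Real.exp (t * x) * ftg α θ ρ x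
      = K * ((c * θ * x + c * ρ) ^ (α - 1) * Real.exp (-(c * θ * x + c * ρ))) := by
    intro x hx
    have hx0 : 0 < x := hx
    have h1 : 0 < ρ + θ * x := by positivity
    have h2 : c * θ * x + c * ρ = c * (ρ + θ * x) := by ring
    have hexp : Real.exp (t * x) * Real.exp (-(ρ + θ * x))
        = Real.exp (-ρ * t / θ) * Real.exp (-(c * (ρ + θ * x))) := by
      rw [← Real.exp_add, ← Real.exp_add]
      congr 1
      simp only [hc_def]
      field_simp
      ring
    have hpow : c ^ (1 - α) * c ^ (α - 1) = 1 := by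
      rw [← Real.rpow_add hc, show (1 - α) + (α - 1) = 0 by ring, Real.rpow_zero]
    rw [ftg, h2, Real.mul_rpow hc.le h1.le, hK]
    linear_combination (uGamma α ρ)⁻¹ * (θ * (ρ + θ * x) ^ (α - 1)) * hexp -
      (uGamma α ρ)⁻¹ * (θ * (ρ + θ * x) ^ (α - 1) * Real.exp (-ρ * t / θ) *
        Real.exp (-(c * (ρ + θ * x)))) * hpow
  -- integrability of the substituted integrand
  have hint : MeasureTheory.IntegrableOn
      (fun x : ℝ => (c * θ * x + c * ρ) ^ (α - 1) * Real.exp (-(c * θ * x + c * ρ)))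
      (Set.Ioi 0) := by
    have h := integrableOn_Ioi_comp_mul_left_iff
      (fun y : ℝ => (y + c * ρ) ^ (α - 1) * Real.exp (-(y + c * ρ))) 0 hcθ
    rw [mul_zero] at h
    have h2 := integrableOn_Ioi_comp_add_right_iff
      (fun z : ℝ => z ^ (α - 1) * Real.exp (-z)) 0 (c * ρ)
    exact h.mpr (h2.mpr ((uGamma_integrand_integrable α hcρ)))
  constructor
  · exact MeasureTheory.IntegrableOn.congr_fun (hint.const_mul K)
      (fun x hx => (key x hx).symm) measurableSet_Ioi
  · rw [setIntegral_congr_fun measurableSet_Ioi key, MeasureTheory.integral_const_mul]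
    have hA : (∫ x in Set.Ioi (0 : ℝ),
        (c * θ * x + c * ρ) ^ (α - 1) * Real.exp (-(c * θ * x + c * ρ)))
        = (c * θ)⁻¹ • ∫ y in Set.Ioi (c * θ * (0 : ℝ)),
            (y + c * ρ) ^ (α - 1) * Real.exp (-(y + c * ρ)) :=
      integral_comp_mul_left_Ioi
        (fun y : ℝ => (y + c * ρ) ^ (α - 1) * Real.exp (-(y + c * ρ))) 0 hcθ
    have hB : (∫ y in Set.Ioi (c * θ * (0 : ℝ)),
        (y + c * ρ) ^ (α - 1) * Real.exp (-(y + c * ρ)))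
        = ∫ z in Set.Ioi (c * θ * (0 : ℝ) + c * ρ), z ^ (α - 1) * Real.exp (-z) :=
      integral_comp_add_right_Ioi (fun z : ℝ => z ^ (α - 1) * Real.exp (-z))
        (c * θ * (0 : ℝ)) (c * ρ)
    have hsub : (∫ x in Set.Ioi (0 : ℝ),
        (c * θ * x + c * ρ) ^ (α - 1) * Real.exp (-(c * θ * x + c * ρ)))
        = (c * θ)⁻¹ * uGamma α (ρ * c) := by
      rw [hA, hB, smul_eq_mul, show c * θ * (0 : ℝ) + c * ρ = ρ * c by ring, uGamma]
    rw [hsub, hK]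
    have hpow2 : c ^ (1 - α) * (c * θ)⁻¹ * θ = c ^ (-α) := by
      rw [show (-α : ℝ) = (1 - α) + (-1) by ring, Real.rpow_add hc, Real.rpow_neg_one,
        mul_inv]
      field_simp
    linear_combination
      (Real.exp (-ρ * t / θ) * uGamma α (ρ * c) * (uGamma α ρ)⁻¹) * hpow2
end

section
/- If X has FTG distribution with parameters α ∈ ℝ, θ > 0, ρ > 0, then E[X] = (α - ρ + μ)/θ, where μ = e^{-ρ} ρ^α / Γ(α,ρ). -/
open MeasureTheory Real Filter Set

lemma integrable_aux (s ρ : ℝ) (hρ : 0 < ρ) :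
    IntegrableOn (fun t : ℝ => t ^ s * Real.exp (-t)) (Set.Ioi ρ) := by
  refine integrable_of_isBigO_exp_neg (b := 1/2) one_half_pos ?_ ?_
  · apply ContinuousOn.mul
    · exact fun x hx =>
        (Real.continuousAt_rpow_const x s (Or.inl (hρ.trans_le hx).ne')).continuousWithinAt
    · exact (Real.continuous_exp.comp continuous_neg).continuousOn
  · have h : Tendsto (fun t : ℝ => t ^ s * Real.exp (-(1/2) * t)) atTop (nhds 0) :=
      tendsto_rpow_mul_exp_neg_mul_atTop_nhds_zero s (1/2) one_half_pos
    have heq : (fun t : ℝ => t ^ s * Real.exp (-t)) =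
        fun t => (t ^ s * Real.exp (-(1/2) * t)) * Real.exp (-(1/2) * t) := by
      ext t
      rw [mul_assoc, ← Real.exp_add]
      ring_nf
    rw [heq]
    have h1 : (fun t : ℝ => t ^ s * Real.exp (-(1/2) * t)) =O[atTop] (fun _ => (1:ℝ)) :=
      h.isBigO_one ℝ
    have h2 : (fun t : ℝ => Real.exp (-(1/2) * t)) =O[atTop]
        (fun t => Real.exp (-(1/2) * t)) := Asymptotics.isBigO_refl _ _
    simpa using h1.mul h2

lemma uGamma_pos_s12 (a ρ : ℝ) (hρ : 0 < ρ) : 0 < uGamma a ρ := by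
  rw [uGamma, setIntegral_pos_iff_support_of_nonneg_ae]
  · have hsub : Set.Ioi ρ ⊆ Function.support (fun t : ℝ => t ^ (a - 1) * Real.exp (-t)) := by
      intro t ht
      have ht0 : 0 < t := hρ.trans ht
      exact (mul_pos (Real.rpow_pos_of_pos ht0 _) (Real.exp_pos _)).ne'
    calc (0 : ENNReal) < volume (Set.Ioi ρ) := by simp
      _ ≤ volume (Function.support (fun t : ℝ => t ^ (a - 1) * Real.exp (-t)) ∩ Set.Ioi ρ) := by
          rw [Set.inter_eq_right.mpr hsub]
  · filter_upwards [ae_restrict_mem measurableSet_Ioi] with t ht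
    exact le_of_lt (mul_pos (Real.rpow_pos_of_pos (hρ.trans ht) _) (Real.exp_pos _))
  · exact integrable_aux _ _ hρ

lemma uGamma_rec (a ρ : ℝ) (hρ : 0 < ρ) :
    ∫ t in Set.Ioi ρ, t ^ a * Real.exp (-t) =
      a * uGamma a ρ + ρ ^ a * Real.exp (-ρ) := by
  have key : ∫ t in Set.Ioi ρ,
      (t ^ a * Real.exp (-t) - a * (t ^ (a - 1) * Real.exp (-t)))
      = 0 - (-(ρ ^ a * Real.exp (-ρ))) := by
    apply integral_Ioi_of_hasDerivAt_of_tendsto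
      (f := fun t => -(t ^ a * Real.exp (-t)))
    · apply ContinuousWithinAt.neg
      apply ContinuousWithinAt.mul
      · exact (Real.continuousAt_rpow_const ρ a (Or.inl hρ.ne')).continuousWithinAt
      · exact (Real.continuous_exp.comp continuous_neg).continuousWithinAt
    · intro t ht
      have ht0 : 0 < t := hρ.trans ht
      have h1 : HasDerivAt (fun t : ℝ => t ^ a) (a * t ^ (a - 1)) t :=
        Real.hasDerivAt_rpow_const (Or.inl ht0.ne')
      have h2 : HasDerivAt (fun t : ℝ => Real.exp (-t)) (-Real.exp (-t)) t := by
        simpa [Function.comp_def] using (Real.hasDerivAt_exp (-t)).comp t (hasDerivAt_neg t)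
      have := (h1.mul h2).neg
      convert this using 1
      · rfl
      · ring
    · exact ((integrable_aux a ρ hρ).sub ((integrable_aux (a - 1) ρ hρ).const_mul a))
    · have h := (tendsto_rpow_mul_exp_neg_mul_atTop_nhds_zero a 1 one_pos).neg
      simp only [neg_zero] at h
      convert h using 2 with t
      simp
  have hint : ∫ t in Set.Ioi ρ,
      (t ^ a * Real.exp (-t) - a * (t ^ (a - 1) * Real.exp (-t)))
      = (∫ t in Set.Ioi ρ, t ^ a * Real.exp (-t)) - a * uGamma a ρ := by
    rw [integral_sub (integrable_aux a ρ hρ) ((integrable_aux (a - 1) ρ hρ).const_mul a),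
      integral_const_mul, uGamma]
  rw [hint] at key
  linarith [key]

theorem ftg_mean (α θ ρ : ℝ) (hθ : 0 < θ) (hρ : 0 < ρ) :
    (∫ x in Set.Ioi (0:ℝ), x * ftg α θ ρ x) =
      (α - ρ + Real.exp (-ρ) * ρ ^ α / uGamma α ρ) / θ := by
  have hG := uGamma_pos_s12 α ρ hρ
  set G := uGamma α ρ with hGdef
  set g : ℝ → ℝ := fun y => y * (ρ + y) ^ (α - 1) * Real.exp (-(ρ + y)) / G with hg
  have h1 : (∫ x in Set.Ioi (0:ℝ), x * ftg α θ ρ x) = ∫ x in Set.Ioi (0:ℝ), g (θ * x) := by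
    apply setIntegral_congr_fun measurableSet_Ioi
    intro x _
    simp only [hg, ftg, ← hGdef]
    field_simp
  have h2 : (∫ x in Set.Ioi (0:ℝ), g (θ * x)) = θ⁻¹ • ∫ y in Set.Ioi (0:ℝ), g y := by
    have := integral_comp_mul_left_Ioi g 0 hθ
    simpa using this
  set h : ℝ → ℝ := fun t => (t - ρ) * t ^ (α - 1) * Real.exp (-t) / G with hh
  have h3 : (∫ y in Set.Ioi (0:ℝ), g y) = ∫ t in Set.Ioi ρ, h t := by
    have heq : ∀ y : ℝ, Set.indicator (Set.Ioi (0:ℝ)) g y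
        = Set.indicator (Set.Ioi ρ) h (y + ρ) := by
      intro y
      by_cases hy : 0 < y
      · rw [Set.indicator_of_mem (Set.mem_Ioi.mpr hy),
          Set.indicator_of_mem (Set.mem_Ioi.mpr (by linarith))]
        simp only [hg, hh, add_sub_cancel_right]
        ring_nf
      · rw [Set.indicator_of_notMem (by simpa using hy),
          Set.indicator_of_notMem (by simp; linarith [not_lt.mp hy])]
    rw [← integral_indicator measurableSet_Ioi, ← integral_indicator measurableSet_Ioi]
    calc ∫ y, Set.indicator (Set.Ioi (0:ℝ)) g y
        = ∫ y, Set.indicator (Set.Ioi ρ) h (y + ρ) := by simp_rw [heq]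
      _ = ∫ t, Set.indicator (Set.Ioi ρ) h t := integral_add_right_eq_self _ ρ
  have h4 : (∫ t in Set.Ioi ρ, h t) = (α - ρ + Real.exp (-ρ) * ρ ^ α / G) := by
    have hexp : ∀ t ∈ Set.Ioi ρ, h t =
        (t ^ α * Real.exp (-t)) / G - (ρ * (t ^ (α - 1) * Real.exp (-t))) / G := by
      intro t ht
      have ht0 : 0 < t := hρ.trans ht
      have hpow : t ^ α = t ^ (α - 1) * t := by
        rw [← Real.rpow_add_one ht0.ne' (α - 1), sub_add_cancel]
      simp only [hh]
      rw [hpow]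
      ring
    rw [setIntegral_congr_fun measurableSet_Ioi hexp]
    have hU : (∫ t in Set.Ioi ρ, t ^ (α - 1) * Real.exp (-t)) = G := rfl
    rw [integral_sub (((integrable_aux α ρ hρ).div_const G))
      (((integrable_aux (α-1) ρ hρ).const_mul ρ).div_const G),
      integral_div, integral_div, integral_const_mul, uGamma_rec α ρ hρ, hU, ← hGdef]
    field_simp
    ring
  rw [h1, h2, h3, h4, smul_eq_mul]
  ring
end
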